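/- Let F be a field of prime characteristic p with |F| ≥ p^n, W_n = Der(F[x₁,...,x_n]/(x₁^p,...,x_n^p)), T = Σ_i F·x_iD_i the canonical torus, and λ = (λ₁,...,λ_n) ∈ F^n a regular vector (λ₁,...,λ_n are linearly independent over the prime field F_p). Then the centralizer in W_n of d_λ = Σ_{i=1}^n λ_i x_i D_i equals T. -/

import Mathlib

open MvPolynomial

set_option synthInstance.maxHeartbeats 400000
set_option maxHeartbeats 1000000

noncomputable section

def truncIdeal (F : Type*) [Field F] (p n : ℕ) : Ideal (MvPolynomial (Fin n) F) :=
  Ideal.span (Set.range fun i => (X i : MvPolynomial (Fin n) F) ^ p)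

abbrev TP (F : Type*) [Field F] (p n : ℕ) :=
  MvPolynomial (Fin n) F ⧸ truncIdeal F p n

abbrev Wn (F : Type*) [Field F] (p n : ℕ) := Derivation F (TP F p n) (TP F p n)

def xv (F : Type*) [Field F] (p n : ℕ) (i : Fin n) : TP F p n :=
  Ideal.Quotient.mk _ (X i)

def xm (F : Type*) [Field F] (p n : ℕ) (α : Fin n → ℕ) : TP F p n :=
  Ideal.Quotient.mk _ (∏ j, X j ^ α j)

/-- `D` is the family of coordinate partial derivatives `D₁, …, D_n` of `A_n`. -/
def IsCoordDer (F : Type*) [Field F] (p n : ℕ) (D : Fin n → Wn F p n) : Prop :=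
  ∀ i j : Fin n, D i (xv F p n j) = if i = j then 1 else 0

def scrD (F : Type*) [Field F] (p n : ℕ) (D : Fin n → Wn F p n) (i : Fin n) :
    Wn F p n :=
  ∑ j : Fin n, if i ≤ j then
    (∏ k : Fin n, if i ≤ k ∧ k < j then xv F p n k ^ (p - 1) else 1) • D j
  else 0

def gradeW (F : Type*) [Field F] (p n : ℕ) (D : Fin n → Wn F p n) (m : ℕ) :
    Submodule F (Wn F p n) :=
  Submodule.span F {w | ∃ (α : Fin n → ℕ) (j : Fin n),
    (∀ l, α l ≤ p - 1) ∧ (∑ l, α l) = m ∧ w = xm F p n α • D j}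

def gradeWZ (F : Type*) [Field F] (p n : ℕ) (D : Fin n → Wn F p n) (k : ℤ) :
    Submodule F (Wn F p n) :=
  Submodule.span F {w | ∃ (α : Fin n → ℕ) (j : Fin n),
    (∀ l, α l ≤ p - 1) ∧ ((∑ l, α l : ℕ) : ℤ) = k + 1 ∧ w = xm F p n α • D j}

def IsRegularVec (F : Type*) [Field F] (p n : ℕ) (lam : Fin n → F) : Prop :=
  ∀ μ : Fin n → ZMod p, (∑ i, ((μ i).val : F) * lam i) = 0 → μ = 0

end

noncomputable section MyAux

variable {F : Type*} [Field F] {p n : ℕ}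

lemma monomial_mem_trunc {m : Fin n →₀ ℕ} (c : F) {j : Fin n} (hj : p ≤ m j) :
    (monomial m c : MvPolynomial (Fin n) F) ∈ truncIdeal F p n := by
  have h1 : Finsupp.single j p ≤ m := by
    rw [Finsupp.single_le_iff]; exact hj
  have h2 : (monomial m c : MvPolynomial (Fin n) F)
      = monomial (m - Finsupp.single j p) c * (X j ^ p) := by
    rw [X_pow_eq_monomial, monomial_mul, mul_one, tsub_add_cancel_of_le h1]
  rw [h2]
  exact Ideal.mul_mem_left _ _ (Ideal.subset_span ⟨j, rfl⟩)

lemma coeff_zero_of_mem_trunc {q : MvPolynomial (Fin n) F} (hq : q ∈ truncIdeal F p n)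
    {m : Fin n →₀ ℕ} (hm : ∀ j, m j < p) : coeff m q = 0 := by
  rw [truncIdeal, Ideal.mem_span_range_iff_exists_fun] at hq
  obtain ⟨c, hc⟩ := hq
  rw [← hc, coeff_sum]
  refine Finset.sum_eq_zero fun i _ => ?_
  rw [X_pow_eq_monomial, coeff_mul_monomial']
  rw [if_neg]
  rw [Finsupp.single_le_iff]
  exact not_le.mpr (hm i)

lemma reduced_eq_zero {q : MvPolynomial (Fin n) F}
    (hred : ∀ m ∈ q.support, ∀ j, m j < p)
    (h0 : Ideal.Quotient.mk (truncIdeal F p n) q = 0) : q = 0 := by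
  have hq : q ∈ truncIdeal F p n := by rwa [Ideal.Quotient.eq_zero_iff_mem] at h0
  ext m
  rw [coeff_zero]
  by_cases hm : m ∈ q.support
  · exact coeff_zero_of_mem_trunc hq (hred m hm)
  · exact notMem_support_iff.mp hm

lemma exists_reduced_lift (f : TP F p n) :
    ∃ q : MvPolynomial (Fin n) F, (∀ m ∈ q.support, ∀ j, m j < p) ∧
      Ideal.Quotient.mk (truncIdeal F p n) q = f := by
  classical
  obtain ⟨q0, rfl⟩ := Ideal.Quotient.mk_surjective f
  refine ⟨∑ m ∈ q0.support.filter (fun m => ∀ j, m j < p), monomial m (coeff m q0), ?_, ?_⟩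
  · intro m hm
    have hco : coeff m (∑ m' ∈ q0.support.filter (fun m' => ∀ j, m' j < p),
        monomial m' (coeff m' q0)) =
        if m ∈ q0.support.filter (fun m' => ∀ j, m' j < p) then coeff m q0 else 0 := by
      rw [coeff_sum]
      simp only [coeff_monomial]
      exact Finset.sum_ite_eq' _ _ _
    have := mem_support_iff.mp hm
    rw [hco] at this
    by_cases h : m ∈ q0.support.filter fun m' => ∀ j, m' j < p
    · exact (Finset.mem_filter.mp h).2
    · exact absurd (if_neg h) this
  · conv_rhs => rw [← support_sum_monomial_coeff q0]
    rw [← Finset.sum_filter_add_sum_filter_not q0.support (fun m => ∀ j, m j < p), map_add,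
      map_sum, map_sum]
    have : ∀ m ∈ q0.support.filter (fun m => ¬ ∀ j, m j < p),
        Ideal.Quotient.mk (truncIdeal F p n) (monomial m (coeff m q0)) = 0 := by
      intro m hm
      obtain ⟨j, hj⟩ := not_forall.mp (Finset.mem_filter.mp hm).2
      rw [Ideal.Quotient.eq_zero_iff_mem]
      exact monomial_mem_trunc _ (not_lt.mp hj)
    rw [Finset.sum_eq_zero this, add_zero]

end MyAux

noncomputable section MyAux2

variable {F : Type*} [Field F] {p n : ℕ}


lemma mvp_smul (a : MvPolynomial (Fin n) F) (x : TP F p n) :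
    a • x = Ideal.Quotient.mk (truncIdeal F p n) a * x := by
  obtain ⟨c, rfl⟩ := Ideal.Quotient.mk_surjective x
  rw [← map_mul]
  exact (Submodule.Quotient.mk_smul (truncIdeal F p n) a c).symm.trans
    (by rw [smul_eq_mul]; rfl)

/-- Pull back a derivation of `TP` along the quotient map. -/
def pullDer (d : Wn F p n) : Derivation F (MvPolynomial (Fin n) F) (TP F p n) where
  toLinearMap := d.toLinearMap ∘ₗ (Ideal.Quotient.mkₐ F (truncIdeal F p n)).toLinearMap
  map_one_eq_zero' := by
    simp [Derivation.map_one_eq_zero]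
  leibniz' a b := by
    simp only [LinearMap.coe_comp, Function.comp_apply, AlgHom.toLinearMap_apply, map_mul,
      Derivation.coeFn_coe, Derivation.leibniz, Algebra.smul_def,
      Ideal.Quotient.algebraMap_eq, Ideal.Quotient.mkₐ_eq_mk, smul_eq_mul, Algebra.algebraMap_self_apply, mvp_smul]

@[simp] lemma pullDer_apply (d : Wn F p n) (q : MvPolynomial (Fin n) F) :
    pullDer d q = d (Ideal.Quotient.mk (truncIdeal F p n) q) := rfl

/-- Push forward a derivation of the polynomial ring along the quotient map. -/
def compMk (d : Derivation F (MvPolynomial (Fin n) F) (MvPolynomial (Fin n) F)) :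
    Derivation F (MvPolynomial (Fin n) F) (TP F p n) where
  toLinearMap := (Ideal.Quotient.mkₐ F (truncIdeal F p n)).toLinearMap ∘ₗ d.toLinearMap
  map_one_eq_zero' := by
    simp [Derivation.map_one_eq_zero]
  leibniz' a b := by
    simp only [LinearMap.coe_comp, Function.comp_apply, AlgHom.toLinearMap_apply,
      Derivation.coeFn_coe, Derivation.leibniz, map_add, Algebra.smul_def,
      Ideal.Quotient.algebraMap_eq, Ideal.Quotient.mkₐ_eq_mk, smul_eq_mul, map_mul, Algebra.algebraMap_self_apply, mvp_smul]

@[simp] lemma compMk_apply (d : Derivation F (MvPolynomial (Fin n) F) (MvPolynomial (Fin n) F))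
    (q : MvPolynomial (Fin n) F) :
    compMk (p := p) d q = Ideal.Quotient.mk (truncIdeal F p n) (d q) := rfl

lemma Wn_ext {d1 d2 : Wn F p n} (h : ∀ i, d1 (xv F p n i) = d2 (xv F p n i)) : d1 = d2 := by
  have h2 : pullDer d1 = pullDer d2 := MvPolynomial.derivation_ext h
  ext a
  obtain ⟨q, rfl⟩ := Ideal.Quotient.mk_surjective a
  exact DFunLike.congr_fun h2 q

lemma der_sum_apply {ι : Type*} (s : Finset ι) (f : ι → Wn F p n) (a : TP F p n) :
    (∑ i ∈ s, f i) a = ∑ i ∈ s, f i a := by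
  induction s using Finset.cons_induction with
  | empty => simp
  | cons i s his ih => rw [Finset.sum_cons, Finset.sum_cons, Derivation.add_apply, ih]

lemma torus_apply {D : Fin n → Wn F p n} (hD : IsCoordDer F p n D) (c : Fin n → F) (j : Fin n) :
    (∑ i, c i • (xv F p n i • D i)) (xv F p n j) = c j • xv F p n j := by
  rw [der_sum_apply]
  have h1 : ∀ i, (c i • (xv F p n i • D i)) (xv F p n j)
      = if i = j then c i • xv F p n i else 0 := by
    intro i
    rw [Derivation.smul_apply, Derivation.smul_apply, hD i j]
    split_ifs with h
    · rw [smul_eq_mul, mul_one]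
    · simp
  simp only [h1]
  rw [Finset.sum_ite_eq' Finset.univ j (fun i => c i • xv F p n i), if_pos (Finset.mem_univ j)]

end MyAux2

noncomputable section MyAux3

variable {F : Type*} [Field F] {p n : ℕ}

lemma mkDer_monomial (lam : Fin n → F) (s : Fin n →₀ ℕ) (r : F) :
    (mkDerivation F fun j => lam j • (X j : MvPolynomial (Fin n) F)) (monomial s r)
      = (∑ j, ((s j : ℕ) : F) * lam j) • monomial s r := by
  rw [mkDerivation_monomial, Finsupp.sum]
  have hterm : ∀ i ∈ s.support,
      monomial (s - Finsupp.single i 1) ((s i : ℕ) : F) • (lam i • (X i : MvPolynomial (Fin n) F))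
        = (((s i : ℕ) : F) * lam i) • monomial s (1 : F) := by
    intro i hi
    have hle : Finsupp.single i 1 ≤ s := by
      rw [Finsupp.single_le_iff]
      exact Nat.one_le_iff_ne_zero.mpr (Finsupp.mem_support_iff.mp hi)
    have hX : (X i : MvPolynomial (Fin n) F) = monomial (Finsupp.single i 1) 1 := rfl
    rw [smul_eq_mul, mul_smul_comm, hX, monomial_mul, mul_one, tsub_add_cancel_of_le hle,
      smul_monomial, smul_monomial, smul_eq_mul, smul_eq_mul, mul_one, mul_comm]
  rw [Finset.sum_congr rfl hterm]
  rw [← Finset.sum_smul]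
  have hext : ∑ i ∈ s.support, ((s i : ℕ) : F) * lam i = ∑ i, ((s i : ℕ) : F) * lam i := by
    apply Finset.sum_subset (Finset.subset_univ _)
    intro i _ hi
    rw [Finsupp.notMem_support_iff.mp hi]
    simp
  rw [hext, smul_comm, smul_monomial, smul_eq_mul, mul_one]

lemma coeff_mkDer (lam : Fin n → F) (q : MvPolynomial (Fin n) F) (m : Fin n →₀ ℕ) :
    coeff m ((mkDerivation F fun j => lam j • (X j : MvPolynomial (Fin n) F)) q)
      = (∑ j, ((m j : ℕ) : F) * lam j) * coeff m q := by
  conv_lhs => rw [← support_sum_monomial_coeff q, map_sum]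
  rw [coeff_sum]
  simp only [mkDer_monomial, coeff_smul, coeff_monomial, smul_eq_mul, mul_ite, mul_zero]
  rw [Finset.sum_ite_eq' q.support m fun s => (∑ j, ((s j : ℕ) : F) * lam j) * coeff s q]
  by_cases hm : m ∈ q.support
  · rw [if_pos hm]
  · rw [if_neg hm, notMem_support_iff.mp hm, mul_zero]

lemma exponent_eq (hp : p.Prime) [CharP F p] {lam : Fin n → F}
    (hreg : IsRegularVec F p n lam) (i : Fin n) {m : Fin n →₀ ℕ} (hm : ∀ j, m j < p)
    (hev : ∑ j, ((m j : ℕ) : F) * lam j = lam i) : m = Finsupp.single i 1 := by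
  haveI : Fact p.Prime := ⟨hp⟩
  set φ := ZMod.castHom (dvd_refl p) F with hφ
  set μ : Fin n → ZMod p := fun j => ((m j : ZMod p) - if j = i then 1 else 0) with hμdef
  have hval : ∀ j, (((μ j).val : ℕ) : F) = ((m j : ℕ) : F) - (if j = i then 1 else 0) := by
    intro j
    have h1 : (((μ j).val : ℕ) : F) = φ (μ j) := by
      rw [hφ, ZMod.castHom_apply, ZMod.natCast_val]
    rw [h1, hμdef]
    simp only [map_sub, map_natCast, apply_ite φ, map_one, map_zero]
  have hsum : ∑ j, (((μ j).val : ℕ) : F) * lam j = 0 := by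
    simp only [hval, sub_mul, Finset.sum_sub_distrib, hev, ite_mul, one_mul, zero_mul]
    rw [Finset.sum_ite_eq' Finset.univ i lam, if_pos (Finset.mem_univ i), sub_self]
  have hμ := hreg μ hsum
  ext j
  have hj : μ j = 0 := congrFun hμ j
  by_cases hji : j = i
  · subst hji
    have h1 : (m j : ZMod p) = ((1 : ℕ) : ZMod p) := by
      have := sub_eq_zero.mp (by simpa [hμdef] using hj)
      simpa using this
    have h2 := (ZMod.natCast_eq_natCast_iff _ _ _).mp h1
    rw [Nat.ModEq, Nat.mod_eq_of_lt (hm j), Nat.mod_eq_of_lt hp.one_lt] at h2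
    simp [h2, Finsupp.single_apply]
  · have h1 : (m j : ZMod p) = ((0 : ℕ) : ZMod p) := by simpa [hμdef, hji] using hj
    have h2 := (ZMod.natCast_eq_natCast_iff _ _ _).mp h1
    rw [Nat.ModEq, Nat.mod_eq_of_lt (hm j), Nat.zero_mod] at h2
    simp [h2, Finsupp.single_apply, Ne.symm hji]

lemma eigen_poly (hp : p.Prime) [CharP F p] {lam : Fin n → F}
    (hreg : IsRegularVec F p n lam) (i : Fin n) {q : MvPolynomial (Fin n) F}
    (hred : ∀ m ∈ q.support, ∀ j, m j < p)
    (hmod : Ideal.Quotient.mk (truncIdeal F p n)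
      ((mkDerivation F fun j => lam j • (X j : MvPolynomial (Fin n) F)) q - lam i • q) = 0) :
    ∃ c : F, q = c • X i := by
  set r := (mkDerivation F fun j => lam j • (X j : MvPolynomial (Fin n) F)) q - lam i • q
    with hrdef
  have hco : ∀ m, coeff m r = (∑ j, ((m j : ℕ) : F) * lam j - lam i) * coeff m q := by
    intro m
    rw [hrdef, coeff_sub, coeff_mkDer, coeff_smul, smul_eq_mul, sub_mul]
  have hrred : ∀ m ∈ r.support, ∀ j, m j < p := by
    intro m hm
    apply hred
    rw [mem_support_iff] at hm ⊢
    intro h0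
    exact hm (by rw [hco, h0, mul_zero])
  have hr0 : r = 0 := reduced_eq_zero hrred hmod
  have hev : ∀ m ∈ q.support, ∑ j, ((m j : ℕ) : F) * lam j = lam i := by
    intro m hm
    have h1 := congrArg (coeff m) hr0
    rw [hco, coeff_zero] at h1
    rcases mul_eq_zero.mp h1 with h | h
    · exact sub_eq_zero.mp h
    · exact absurd h (mem_support_iff.mp hm)
  have hsupp : q.support ⊆ {Finsupp.single i 1} := by
    intro m hm
    rw [Finset.mem_singleton]
    exact exponent_eq hp hreg i (hred m hm) (hev m hm)
  refine ⟨coeff (Finsupp.single i 1) q, ?_⟩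
  have hX : (X i : MvPolynomial (Fin n) F) = monomial (Finsupp.single i 1) 1 := rfl
  ext m
  rw [coeff_smul, smul_eq_mul, hX, coeff_monomial]
  by_cases hm : Finsupp.single i 1 = m
  · rw [if_pos hm, mul_one, hm]
  · rw [if_neg hm, mul_zero]
    refine notMem_support_iff.mp fun h => hm ?_
    exact (Finset.mem_singleton.mp (hsupp h)).symm

end MyAux3

set_option maxHeartbeats 4000000 in
/-- For a regular vector `λ ∈ Fⁿ`, the centralizer in `W_n` of
`d_λ = Σ λᵢ xᵢ Dᵢ` equals the canonical torus `T = Σ F·xᵢDᵢ`. -/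
theorem centralizer_d_lambda_eq_torus (F : Type*) [Field F] (p n : ℕ)
    (hp : p.Prime) [CharP F p]
    (hcard : (p ^ n : Cardinal) ≤ Cardinal.mk F)
    (D : Fin n → Wn F p n) (hD : IsCoordDer F p n D)
    (lam : Fin n → F) (hreg : IsRegularVec F p n lam) :
    {y : Wn F p n | ⁅∑ i, lam i • (xv F p n i • D i), y⁆ = 0} =
      (Submodule.span F (Set.range fun i => xv F p n i • D i) :
        Submodule F (Wn F p n)) := by
  classical
  obtain ⟨d, hd⟩ : ∃ d0 : Wn F p n, d0 = ∑ i, lam i • (xv F p n i • D i) := ⟨_, rfl⟩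
  rw [← hd]
  have hdx : ∀ j, d (xv F p n j) = lam j • xv F p n j := fun j => by
    rw [hd]; exact torus_apply hD lam j
  have hmksmul : ∀ (c : F) (q : MvPolynomial (Fin n) F),
      Ideal.Quotient.mk (truncIdeal F p n) (c • q)
        = c • Ideal.Quotient.mk (truncIdeal F p n) q := by
    intro c q
    rw [← Ideal.Quotient.mkₐ_eq_mk F, map_smul, Ideal.Quotient.mkₐ_eq_mk]
  ext y
  simp only [Set.mem_setOf_eq, SetLike.mem_coe]
  constructor
  · intro hy
    have hcomm : ∀ a, d (y a) = y (d a) := by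
      intro a
      have h1 := congrArg (fun z : Wn F p n => z a) hy
      simp only [Derivation.commutator_apply, Derivation.zero_apply] at h1
      exact sub_eq_zero.mp h1
    have hpull : pullDer d
        = compMk (mkDerivation F fun j => lam j • (X j : MvPolynomial (Fin n) F)) := by
      apply MvPolynomial.derivation_ext
      intro j
      rw [pullDer_apply, compMk_apply, mkDerivation_X, hmksmul,
        show (Ideal.Quotient.mk (truncIdeal F p n)) (X j) = xv F p n j from rfl]
      exact hdx j
    have key : ∀ i : Fin n, ∃ c : F, y (xv F p n i) = c • xv F p n i := by
      intro i
      obtain ⟨q, hred, hq⟩ := exists_reduced_lift (y (xv F p n i))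
      have heq : d (y (xv F p n i)) = lam i • y (xv F p n i) := by
        rw [hcomm, hdx, Derivation.map_smul]
      have h2 : Ideal.Quotient.mk (truncIdeal F p n)
          ((mkDerivation F fun j => lam j • (X j : MvPolynomial (Fin n) F)) q
            - lam i • q) = 0 := by
        have h3 : Ideal.Quotient.mk (truncIdeal F p n)
            ((mkDerivation F fun j => lam j • (X j : MvPolynomial (Fin n) F)) q)
              = d (y (xv F p n i)) := by
          rw [← compMk_apply, ← hpull, pullDer_apply, hq]
        rw [map_sub, h3, heq, hmksmul, hq, sub_self]
      obtain ⟨c, hc⟩ := eigen_poly hp hreg i hred h2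
      exact ⟨c, by rw [← hq, hc, hmksmul]; rfl⟩
    choose c hc using key
    have hy' : y = ∑ i, c i • (xv F p n i • D i) := by
      apply Wn_ext
      intro j
      rw [hc j, torus_apply hD c j]
    rw [hy']
    exact Submodule.sum_mem _ fun i _ =>
      Submodule.smul_mem _ _ (Submodule.subset_span ⟨i, rfl⟩)
  · intro hy
    induction hy using Submodule.span_induction with
    | mem w hw =>
      obtain ⟨i, rfl⟩ := hw
      apply Wn_ext (d2 := 0)
      intro j
      rw [Derivation.commutator_apply, Derivation.zero_apply]
      have hg : (xv F p n i • D i) (xv F p n j) = if i = j then xv F p n i else 0 := by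
        rw [Derivation.smul_apply, hD i j]
        split_ifs
        · rw [smul_eq_mul, mul_one]
        · simp
      rw [hg, hdx, Derivation.map_smul, hg]
      split_ifs with h
      · subst h; rw [hdx, sub_self]
      · simp
    | zero =>
      ext b
      simp only [Derivation.commutator_apply, Derivation.zero_apply, map_zero, sub_self]
    | add x z hx hz hx0 hz0 =>
      rw [show ⁅d, x + z⁆ = ⁅d, x⁆ + ⁅d, z⁆ from by
        ext b
        simp only [Derivation.commutator_apply, Derivation.add_apply, map_add]
        abel, hx0, hz0, add_zero]
    | smul a x hx hx0 =>
      have hsm : ⁅d, a • x⁆ = a • ⁅d, x⁆ := by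
        ext b
        simp only [Derivation.commutator_apply, Derivation.smul_apply, Derivation.map_smul,
          smul_sub]
      rw [hsm, hx0, smul_zero]
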